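/- Define f̄_T(x) = -Ψ(1)Φ(x₁) + Σ_{i=2}^{T} [Ψ(-x_{i-1})Φ(-x_i) - Ψ(x_{i-1})Φ(x_i)]. Then for all x ∈ ℝ^T, ‖∇f̄_T(x)‖_∞ ≤ 23 and ‖∇f̄_T(x)‖₂ ≤ 23√T. -/

import Mathlib

open scoped BigOperators

/-- Ψ(x) = 0 for x ≤ 1/2 and exp(1 - 1/(2x-1)²) for x > 1/2. -/
noncomputable def Psi (x : ℝ) : ℝ :=
  if x ≤ 1/2 then 0 else Real.exp (1 - 1 / (2*x - 1)^2)

/-- Φ(y) = √e · ∫_{-∞}^y e^{-t²/2} dt. -/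
noncomputable def Phi (y : ℝ) : ℝ :=
  Real.sqrt (Real.exp 1) * ∫ t in Set.Iic y, Real.exp (-t^2/2)

/-- The Nesterov-style hard instance f̄_T (0-indexed coordinates). -/
noncomputable def fbar (T : ℕ) (x : Fin T → ℝ) : ℝ :=
  ∑ i : Fin T,
    if (i : ℕ) = 0 then -(Psi 1 * Phi (x i))
    else Psi (-(x ⟨i.1 - 1, lt_of_le_of_lt (Nat.sub_le _ _) i.isLt⟩)) * Phi (-(x i))
         - Psi (x ⟨i.1 - 1, lt_of_le_of_lt (Nat.sub_le _ _) i.isLt⟩) * Phi (x i)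

/-- j-th partial derivative of f̄_T at x. -/
noncomputable def fpartial (T : ℕ) (x : Fin T → ℝ) (j : Fin T) : ℝ :=
  deriv (fun s => fbar T (Function.update x j s)) (x j)

section Aux
open Real Set Filter MeasureTheory

noncomputable def Psi' (x : ℝ) : ℝ :=
  if x ≤ 1/2 then 0 else Psi x * (4 / (2*x - 1)^3)

noncomputable def PhiD (y : ℝ) : ℝ := Real.sqrt (Real.exp 1) * Real.exp (-y^2/2)

lemma psi_nonneg (x : ℝ) : 0 ≤ Psi x := by
  unfold Psi; split
  · exact le_rfl
  · positivity

lemma psi_le (x : ℝ) : Psi x ≤ Real.exp 1 := by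
  unfold Psi; split
  · positivity
  · apply Real.exp_le_exp.2
    have : 0 ≤ 1 / (2*x - 1)^2 := by positivity
    linarith

lemma psi_one : Psi 1 = 1 := by norm_num [Psi]

lemma psi_zero_of_le {x : ℝ} (h : x ≤ 1/2) : Psi x = 0 := if_pos h
lemma psi'_zero_of_le {x : ℝ} (h : x ≤ 1/2) : Psi' x = 0 := if_pos h

lemma psi_or (x : ℝ) : Psi x = 0 ∨ Psi (-x) = 0 := by
  rcases le_or_gt x (1/2) with h | h
  · exact Or.inl (psi_zero_of_le h)
  · exact Or.inr (psi_zero_of_le (by linarith))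

lemma psi'_or (x : ℝ) : Psi' x = 0 ∨ Psi' (-x) = 0 := by
  rcases le_or_gt x (1/2) with h | h
  · exact Or.inl (psi'_zero_of_le h)
  · exact Or.inr (psi'_zero_of_le (by linarith))

lemma key_t (t : ℝ) : t * Real.exp (-t) ≤ Real.exp (-1) := by
  rcases le_or_gt t 0 with h | h
  · nlinarith [Real.exp_pos (-t), Real.exp_pos (-1 : ℝ)]
  · have h1 : t ≤ Real.exp (t - 1) := by
      have := Real.add_one_le_exp (t - 1); linarith
    calc t * Real.exp (-t) ≤ Real.exp (t-1) * Real.exp (-t) :=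
          mul_le_mul_of_nonneg_right h1 (Real.exp_pos _).le
      _ = Real.exp (-1) := by rw [← Real.exp_add]; ring_nf

lemma psi'_bound (x : ℝ) : |Psi' x| ≤ Real.sqrt (54 / Real.exp 1) := by
  have hM : 0 ≤ Real.sqrt (54 / Real.exp 1) := Real.sqrt_nonneg _
  unfold Psi'
  split
  · simpa using hM
  · rename_i h
    push_neg at h
    set u : ℝ := 2*x - 1 with hu
    have hupos : 0 < u := by simp only [hu]; linarith
    have hP : Psi x = Real.exp (1 - 1/u^2) := by
      rw [Psi, if_neg (not_le.2 h)]
    rw [hP, abs_of_nonneg (by positivity)]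
    rw [Real.le_sqrt (by positivity) (by positivity)]
    set s : ℝ := 1/u^2 with hsdef
    have hs : 0 < s := by positivity
    have h1 := key_t (2*s/3)
    have h2 : s * Real.exp (-(2*s/3)) ≤ 3/2 * Real.exp (-1) := by
      nlinarith [Real.exp_pos (-(2*s/3))]
    have h3 : (s * Real.exp (-(2*s/3)))^3 ≤ (3/2 * Real.exp (-1))^3 :=
      pow_le_pow_left₀ (by positivity) h2 3
    have hE3 : (Real.exp (-(2*s/3)))^3 = Real.exp (-(2*s)) := by
      rw [show (-(2*s) : ℝ) = (-(2*s/3)) + ((-(2*s/3)) + (-(2*s/3))) by ring,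
        Real.exp_add, Real.exp_add]; ring
    have h3' : s^3 * Real.exp (-(2*s)) ≤ 27/8 * (Real.exp (-1))^3 := by
      rw [← hE3]; nlinarith [h3]
    have hinv : Real.exp (-1) * Real.exp 1 = 1 := by
      rw [← Real.exp_add]; simp
    have h4 : 16 * (Real.exp 1)^3 * (s^3 * Real.exp (-(2*s))) ≤ 54 := by
      have hmul := mul_le_mul_of_nonneg_left h3'
        (le_of_lt (by positivity : (0:ℝ) < 16*(Real.exp 1)^3))
      have : 16*(Real.exp 1)^3 * (27/8 * (Real.exp (-1))^3) = 54 * (Real.exp (-1) * Real.exp 1)^3 := by ring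
      rw [this, hinv] at hmul; linarith [hmul]
    have hexp2 : (Real.exp (1-s))^2 = (Real.exp 1)^2 * Real.exp (-(2*s)) := by
      rw [sq, ← Real.exp_add, show ((1-s)+(1-s) : ℝ) = 1 + (1 + -(2*s)) by ring,
        Real.exp_add, Real.exp_add]; ring
    have hu2 : (4 / u^3)^2 = 16 * s^3 := by
      rw [hsdef]; field_simp; ring
    rw [mul_pow, hexp2, hu2, div_eq_mul_inv]
    have hee : Real.exp 1 * (Real.exp 1)⁻¹ = 1 := mul_inv_cancel₀ (Real.exp_pos 1).ne'
    calc Real.exp 1 ^2 * Real.exp (-(2*s)) * (16*s^3)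
        = 16 * (Real.exp 1)^3 * (s^3 * Real.exp (-(2*s))) * (Real.exp 1)⁻¹ := by
          have h5 : Real.exp 1 ^2 * Real.exp (-(2*s)) * (16*s^3) * (Real.exp 1 * (Real.exp 1)⁻¹)
              = 16 * (Real.exp 1)^3 * (s^3 * Real.exp (-(2*s))) * (Real.exp 1)⁻¹ := by ring
          rw [hee, mul_one] at h5; exact h5
      _ ≤ 54 * (Real.exp 1)⁻¹ :=
          mul_le_mul_of_nonneg_right h4 (by positivity)

lemma gauss_cont : Continuous (fun t : ℝ => Real.exp (-t^2/2)) := by fun_prop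

lemma gauss_integrable : Integrable (fun t : ℝ => Real.exp (-t^2/2)) := by
  have h : (fun t : ℝ => Real.exp (-t^2/2)) = fun t : ℝ => Real.exp (-(1/2) * t^2) := by
    funext t; ring_nf
  rw [h]; exact integrable_exp_neg_mul_sq (by norm_num)

lemma gauss_int_nonneg (y : ℝ) : 0 ≤ ∫ t in Set.Iic y, Real.exp (-t^2/2) :=
  setIntegral_nonneg measurableSet_Iic (fun t _ => (Real.exp_pos _).le)

lemma gauss_int_le (y : ℝ) : (∫ t in Set.Iic y, Real.exp (-t^2/2)) ≤ Real.sqrt (2*Real.pi) := by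
  have h1 : (∫ t in Set.Iic y, Real.exp (-t^2/2)) ≤ ∫ t : ℝ, Real.exp (-t^2/2) := by
    apply setIntegral_le_integral gauss_integrable
    filter_upwards with t using (Real.exp_pos _).le
  have h2 : (∫ t : ℝ, Real.exp (-t^2/2)) = Real.sqrt (2*Real.pi) := by
    have h : (fun t : ℝ => Real.exp (-t^2/2)) = fun t : ℝ => Real.exp (-(1/2) * t^2) := by
      funext t; ring_nf
    rw [h, integral_gaussian]
    rw [show (2:ℝ)*Real.pi = Real.pi/(1/2) by ring]
  linarith

lemma phi_nonneg (y : ℝ) : 0 ≤ Phi y :=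
  mul_nonneg (Real.sqrt_nonneg _) (gauss_int_nonneg y)

lemma phi_le (y : ℝ) : Phi y ≤ Real.sqrt (Real.exp 1) * Real.sqrt (2*Real.pi) :=
  mul_le_mul_of_nonneg_left (gauss_int_le y) (Real.sqrt_nonneg _)

lemma phiD_nonneg (y : ℝ) : 0 ≤ PhiD y := by
  unfold PhiD; positivity

lemma phiD_le (y : ℝ) : PhiD y ≤ Real.sqrt (Real.exp 1) := by
  unfold PhiD
  have : Real.exp (-y^2/2) ≤ 1 := Real.exp_le_one_iff.2 (by nlinarith [sq_nonneg y])
  nlinarith [Real.sqrt_nonneg (Real.exp 1), Real.exp_pos (-y^2/2)]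

lemma phi_hasDeriv (y : ℝ) : HasDerivAt Phi (PhiD y) y := by
  have key : ∀ z : ℝ, (∫ t in Set.Iic z, Real.exp (-t^2/2))
      = (∫ t in Set.Iic (0:ℝ), Real.exp (-t^2/2)) + ∫ t in (0:ℝ)..z, Real.exp (-t^2/2) := by
    intro z
    rw [← intervalIntegral.integral_Iic_sub_Iic gauss_integrable.integrableOn
      gauss_integrable.integrableOn]
    ring
  have hPhi : Phi = fun z => Real.sqrt (Real.exp 1) *
      ((∫ t in Set.Iic (0:ℝ), Real.exp (-t^2/2)) + ∫ t in (0:ℝ)..z, Real.exp (-t^2/2)) := by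
    funext z; rw [Phi, key z]
  rw [hPhi]
  have hD : HasDerivAt (fun z : ℝ => ∫ t in (0:ℝ)..z, Real.exp (-t^2/2))
      (Real.exp (-y^2/2)) y := by
    apply intervalIntegral.integral_hasDerivAt_right
      gauss_integrable.intervalIntegrable
      (gauss_cont.stronglyMeasurableAtFilter _ _)
      gauss_cont.continuousAt
  exact ((hD.const_add _).const_mul _)

lemma exp_le_sq {u : ℝ} (hu : 0 < u) : Real.exp (1 - 1/u^2) ≤ u^2 := by
  have hk := key_t (1/u^2)
  have h6 := mul_le_mul_of_nonneg_left hk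
    (le_of_lt (by positivity : (0:ℝ) < Real.exp 1 * u^2))
  have e1 : Real.exp 1 * u^2 * (1/u^2 * Real.exp (-(1/u^2)))
      = Real.exp (1 - 1/u^2) := by
    rw [show Real.exp (1 - 1/u^2) = Real.exp 1 * Real.exp (-(1/u^2)) by
      rw [← Real.exp_add]; ring_nf]
    field_simp
  have hinv : Real.exp (-1) * Real.exp 1 = 1 := by rw [← Real.exp_add]; simp
  have e2 : Real.exp 1 * u^2 * Real.exp (-1) = u^2 := by
    rw [show Real.exp 1 * u^2 * Real.exp (-1) = u^2 * (Real.exp (-1) * Real.exp 1) by ring,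
      hinv, mul_one]
  rw [e1, e2] at h6; exact h6

lemma psi_hasDeriv (x : ℝ) : HasDerivAt Psi (Psi' x) x := by
  rcases lt_trichotomy x (1/2) with h | h | h
  · have hev : Psi =ᶠ[nhds x] fun _ => (0:ℝ) := by
      filter_upwards [Iio_mem_nhds h] with y hy
      exact psi_zero_of_le (le_of_lt hy)
    have := (hasDerivAt_const x (0:ℝ)).congr_of_eventuallyEq hev
    rwa [Psi', if_pos h.le]
  · subst h
    rw [Psi', if_pos le_rfl]
    rw [hasDerivAt_iff_tendsto_slope]
    have hb : ∀ y : ℝ, |slope Psi (1/2) y| ≤ 4 * |y - 1/2| := by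
      intro y
      rcases le_or_gt y (1/2) with hy | hy
      · have hz : slope Psi (1/2) y = 0 := by
          rw [slope_def_field, psi_zero_of_le hy, psi_zero_of_le (le_refl (1/2 : ℝ))]; simp
        rw [hz, abs_zero]; positivity
      · have hu : 0 < 2*y - 1 := by linarith
        have hP : Psi y = Real.exp (1 - 1/(2*y-1)^2) := if_neg (not_le.2 hy)
        have hle := exp_le_sq hu
        rw [slope_def_field, psi_zero_of_le (le_refl (1/2 : ℝ)), hP, sub_zero]
        rw [abs_of_nonneg (div_nonneg (Real.exp_pos _).le (by linarith)),
          abs_of_pos (by linarith : (0:ℝ) < y - 1/2),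
          div_le_iff₀ (by linarith : (0:ℝ) < y - 1/2)]
        nlinarith [hle]
    have hg : Tendsto (fun y : ℝ => 4 * |y - 1/2|) (nhds (1/2 : ℝ)) (nhds 0) := by
      have : Continuous (fun y : ℝ => 4 * |y - 1/2|) := by fun_prop
      simpa using this.tendsto (1/2 : ℝ)
    exact squeeze_zero_norm (fun y => hb y) (hg.mono_left nhdsWithin_le_nhds)
  · have hne : (2*x - 1) ≠ 0 := by intro hc; rw [sub_eq_zero] at hc; linarith
    have h1 : HasDerivAt (fun y : ℝ => 2*y - 1) 2 x := by
      simpa using ((hasDerivAt_id x).const_mul (2:ℝ)).sub_const 1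
    have h2 := h1.pow 2
    have h3 := h2.inv (pow_ne_zero 2 hne)
    have h4 := h3.const_sub 1
    have h5 := h4.exp
    have hfun : (fun y : ℝ => Real.exp (1 - ((2*y-1)^2)⁻¹))
        = fun y : ℝ => Real.exp (1 - 1/(2*y-1)^2) := by
      funext y; rw [one_div]
    replace h5 : HasDerivAt (fun y : ℝ => Real.exp (1 - 1/(2*y-1)^2))
        (Real.exp (1 - ((2*x-1)^2)⁻¹) * -(-(((2:ℕ):ℝ) * (2*x-1)^(2-1) * 2) / ((2*x-1)^2)^2)) x := by
      rw [← hfun]; exact h5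
    have hev : Psi =ᶠ[nhds x] fun y : ℝ => Real.exp (1 - 1/(2*y-1)^2) := by
      filter_upwards [Ioi_mem_nhds h] with y hy
      exact if_neg (not_le.2 (by simpa using hy))
    have H := h5.congr_of_eventuallyEq hev
    have hval : Psi' x = Real.exp (1 - ((2*x-1)^2)⁻¹) * -(-(↑2 * (2*x-1)^(2-1) * 2) / ((2*x-1)^2)^2) := by
      rw [Psi', if_neg (not_le.2 h), Psi, if_neg (not_le.2 h), one_div]
      norm_num
      field_simp
      ring
    rw [hval]
    exact H

lemma num_bound : Real.exp 1 * Real.sqrt (Real.exp 1)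
    + Real.sqrt (54 / Real.exp 1) * (Real.sqrt (Real.exp 1) * Real.sqrt (2 * Real.pi)) ≤ 23 := by
  have he := Real.exp_one_lt_d9
  have he' := Real.exp_one_gt_d9
  have hpi := Real.pi_lt_d2
  have hepos := Real.exp_pos 1
  have s1 : Real.sqrt (Real.exp 1) ≤ 1.6489 :=
    Real.sqrt_le_iff.2 ⟨by norm_num, by nlinarith⟩
  have s2 : Real.sqrt (54 / Real.exp 1) ≤ 4.458 := by
    apply Real.sqrt_le_iff.2 ⟨by norm_num, ?_⟩
    rw [div_le_iff₀ hepos]; nlinarith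
  have s3 : Real.sqrt (2 * Real.pi) ≤ 2.51 :=
    Real.sqrt_le_iff.2 ⟨by norm_num, by nlinarith⟩
  have n1 : 0 ≤ Real.sqrt (Real.exp 1) := Real.sqrt_nonneg _
  have n2 : 0 ≤ Real.sqrt (54 / Real.exp 1) := Real.sqrt_nonneg _
  have n3 : 0 ≤ Real.sqrt (2 * Real.pi) := Real.sqrt_nonneg _
  nlinarith [mul_le_mul s2 (mul_le_mul s1 s3 n3 (by norm_num)) (by positivity) (by norm_num),
    mul_le_mul he.le s1 n1 (by norm_num)]

lemma fin_sum_ite {T : ℕ} (k : ℕ) (g : Fin T → ℝ) :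
    (∑ i : Fin T, if (i:ℕ) = k then g i else 0)
      = if h : k < T then g ⟨k, h⟩ else 0 := by
  split
  · rename_i h
    rw [Finset.sum_eq_single (⟨k, h⟩ : Fin T)]
    · simp
    · intro b _ hb
      rw [if_neg]; intro hc; exact hb (Fin.ext hc)
    · intro hc; exact absurd (Finset.mem_univ _) hc
  · rename_i h
    apply Finset.sum_eq_zero
    intro i _
    rw [if_neg]; intro hc; exact h (hc ▸ i.isLt)

noncomputable def dcoef (T : ℕ) (x : Fin T → ℝ) (j i : Fin T) : ℝ :=
  (if i = j then
     (if (j : ℕ) = 0 then -(Psi 1 * PhiD (x j))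
      else Psi (-(x ⟨j.1 - 1, lt_of_le_of_lt (Nat.sub_le _ _) j.isLt⟩)) * (PhiD (-(x j)) * -1)
           - Psi (x ⟨j.1 - 1, lt_of_le_of_lt (Nat.sub_le _ _) j.isLt⟩) * PhiD (x j))
   else 0)
  + (if (i : ℕ) = (j : ℕ) + 1 then
       Psi' (-(x j)) * -1 * Phi (-(x i)) - Psi' (x j) * Phi (x i)
     else 0)

lemma fbar_hasDeriv (T : ℕ) (x : Fin T → ℝ) (j : Fin T) :
    HasDerivAt (fun s => fbar T (Function.update x j s)) (∑ i : Fin T, dcoef T x j i) (x j) := by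
  unfold fbar
  refine HasDerivAt.fun_sum fun i _ => ?_
  by_cases h0 : (i : ℕ) = 0
  · by_cases hij : i = j
    · subst hij
      refine HasDerivAt.congr_of_eventuallyEq
        (f := fun s : ℝ => -(Psi 1 * Phi s)) ?_
        (Filter.Eventually.of_forall fun s => ?_)
      · have hd : dcoef T x i i = -(Psi 1 * PhiD (x i)) := by
          rw [dcoef, if_pos rfl, if_pos h0,
            if_neg (by omega : ¬((i:ℕ) = (i:ℕ)+1)), add_zero]
        rw [hd]
        exact ((phi_hasDeriv (x i)).const_mul (Psi 1)).neg
      · simp [h0, Function.update_self]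
    · refine HasDerivAt.congr_of_eventuallyEq
        (f := fun _ : ℝ => -(Psi 1 * Phi (x i))) ?_
        (Filter.Eventually.of_forall fun s => ?_)
      · have hd : dcoef T x j i = 0 := by
          rw [dcoef, if_neg hij, if_neg (by omega : ¬((i:ℕ) = (j:ℕ)+1)), add_zero]
        rw [hd]
        exact hasDerivAt_const _ _
      · simp [h0, Function.update_of_ne hij]
  · by_cases hij : i = j
    · subst hij
      refine HasDerivAt.congr_of_eventuallyEq
        (f := fun s : ℝ =>
          Psi (-(x ⟨i.1 - 1, lt_of_le_of_lt (Nat.sub_le _ _) i.isLt⟩)) * Phi (-s)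
          - Psi (x ⟨i.1 - 1, lt_of_le_of_lt (Nat.sub_le _ _) i.isLt⟩) * Phi s) ?_
        (Filter.Eventually.of_forall fun s => ?_)
      · have hd : dcoef T x i i =
            Psi (-(x ⟨i.1 - 1, lt_of_le_of_lt (Nat.sub_le _ _) i.isLt⟩)) * (PhiD (-(x i)) * -1)
            - Psi (x ⟨i.1 - 1, lt_of_le_of_lt (Nat.sub_le _ _) i.isLt⟩) * PhiD (x i) := by
          rw [dcoef, if_pos rfl, if_neg h0,
            if_neg (by omega : ¬((i:ℕ) = (i:ℕ)+1)), add_zero]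
        rw [hd]
        have hneg : HasDerivAt (fun s : ℝ => -s) (-1 : ℝ) (x i) := (hasDerivAt_id (x i)).neg
        have h1 : HasDerivAt (fun s : ℝ => Phi (-s)) (PhiD (-(x i)) * -1) (x i) :=
          (phi_hasDeriv (-(x i))).comp (x i) hneg
        exact (h1.const_mul _).sub ((phi_hasDeriv (x i)).const_mul _)
      · have hpne : (⟨i.1 - 1, lt_of_le_of_lt (Nat.sub_le _ _) i.isLt⟩ : Fin T) ≠ i := by
          intro hc
          have := congrArg Fin.val hc
          simp at this; omega
        simp [h0, Function.update_self, Function.update_of_ne hpne]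
    · by_cases hs : (i : ℕ) = (j : ℕ) + 1
      · refine HasDerivAt.congr_of_eventuallyEq
          (f := fun s : ℝ => Psi (-s) * Phi (-(x i)) - Psi s * Phi (x i)) ?_
          (Filter.Eventually.of_forall fun s => ?_)
        · have hd : dcoef T x j i =
              Psi' (-(x j)) * -1 * Phi (-(x i)) - Psi' (x j) * Phi (x i) := by
            rw [dcoef, if_neg hij, if_pos hs, zero_add]
          rw [hd]
          have hneg : HasDerivAt (fun s : ℝ => -s) (-1 : ℝ) (x j) := (hasDerivAt_id (x j)).neg
          have h1 : HasDerivAt (fun s : ℝ => Psi (-s)) (Psi' (-(x j)) * -1) (x j) :=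
            (psi_hasDeriv (-(x j))).comp (x j) hneg
          exact (h1.mul_const _).sub ((psi_hasDeriv (x j)).mul_const _)
        · have hpj : (⟨i.1 - 1, lt_of_le_of_lt (Nat.sub_le _ _) i.isLt⟩ : Fin T) = j :=
            Fin.ext (by simp only []; omega)
          simp only [if_neg h0]
          rw [hpj, Function.update_self, Function.update_of_ne hij]
      · refine HasDerivAt.congr_of_eventuallyEq
          (f := fun _ : ℝ =>
            Psi (-(x ⟨i.1 - 1, lt_of_le_of_lt (Nat.sub_le _ _) i.isLt⟩)) * Phi (-(x i))
            - Psi (x ⟨i.1 - 1, lt_of_le_of_lt (Nat.sub_le _ _) i.isLt⟩) * Phi (x i)) ?_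
          (Filter.Eventually.of_forall fun s => ?_)
        · have hd : dcoef T x j i = 0 := by
            rw [dcoef, if_neg hij, if_neg hs, add_zero]
          rw [hd]
          exact hasDerivAt_const _ _
        · have hpne : (⟨i.1 - 1, lt_of_le_of_lt (Nat.sub_le _ _) i.isLt⟩ : Fin T) ≠ j := by
            intro hc
            have := congrArg Fin.val hc
            simp at this; omega
          simp [h0, Function.update_of_ne hij, Function.update_of_ne hpne]

end Aux

/-- The gradient of f̄_T is bounded: ‖∇f̄_T(x)‖_∞ ≤ 23 and ‖∇f̄_T(x)‖₂ ≤ 23√T. -/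
theorem stmt_7 (T : ℕ) (hT : 1 ≤ T) (x : Fin T → ℝ) :
    (∀ j : Fin T, |fpartial T x j| ≤ 23) ∧
      Real.sqrt (∑ j : Fin T, (fpartial T x j)^2) ≤ 23 * Real.sqrt T := by
  have key : ∀ j : Fin T, |fpartial T x j| ≤ 23 := by
    intro j
    have hder := fbar_hasDeriv T x j
    have hfp : fpartial T x j = ∑ i : Fin T, dcoef T x j i := hder.deriv
    have hsplit : (∑ i : Fin T, dcoef T x j i)
        = (if (j : ℕ) = 0 then -(Psi 1 * PhiD (x j))
           else Psi (-(x ⟨j.1 - 1, lt_of_le_of_lt (Nat.sub_le _ _) j.isLt⟩)) * (PhiD (-(x j)) * -1)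
                - Psi (x ⟨j.1 - 1, lt_of_le_of_lt (Nat.sub_le _ _) j.isLt⟩) * PhiD (x j))
          + (if h : (j : ℕ) + 1 < T then
               Psi' (-(x j)) * -1 * Phi (-(x ⟨(j:ℕ)+1, h⟩)) - Psi' (x j) * Phi (x ⟨(j:ℕ)+1, h⟩)
             else 0) := by
      unfold dcoef
      rw [Finset.sum_add_distrib, Finset.sum_ite_eq' Finset.univ j, if_pos (Finset.mem_univ j),
        fin_sum_ite]
    rw [hfp, hsplit]
    have habsA : |(if (j : ℕ) = 0 then -(Psi 1 * PhiD (x j))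
           else Psi (-(x ⟨j.1 - 1, lt_of_le_of_lt (Nat.sub_le _ _) j.isLt⟩)) * (PhiD (-(x j)) * -1)
                - Psi (x ⟨j.1 - 1, lt_of_le_of_lt (Nat.sub_le _ _) j.isLt⟩) * PhiD (x j))|
        ≤ Real.exp 1 * Real.sqrt (Real.exp 1) := by
      have he1 : (1:ℝ) ≤ Real.exp 1 := by
        have := Real.exp_one_gt_d9; linarith
      split
      · rw [abs_neg, abs_of_nonneg (mul_nonneg (psi_nonneg 1) (phiD_nonneg _)),
          psi_one, one_mul]
        nlinarith [phiD_le (x j), Real.sqrt_nonneg (Real.exp 1), phiD_nonneg (x j)]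
      · set a := x ⟨j.1 - 1, lt_of_le_of_lt (Nat.sub_le _ _) j.isLt⟩ with ha
        have hE : Psi (-a) * (PhiD (-(x j)) * -1) - Psi a * PhiD (x j)
            = -(Psi (-a) * PhiD (-(x j)) + Psi a * PhiD (x j)) := by ring
        rw [hE, abs_neg, abs_of_nonneg (add_nonneg
          (mul_nonneg (psi_nonneg _) (phiD_nonneg _))
          (mul_nonneg (psi_nonneg _) (phiD_nonneg _)))]
        rcases psi_or a with hz | hz
        · rw [hz, zero_mul, add_zero]
          exact mul_le_mul (psi_le _) (phiD_le _) (phiD_nonneg _) (Real.exp_pos 1).le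
        · rw [hz, zero_mul, zero_add]
          exact mul_le_mul (psi_le _) (phiD_le _) (phiD_nonneg _) (Real.exp_pos 1).le
    have habsS : |(if h : (j : ℕ) + 1 < T then
               Psi' (-(x j)) * -1 * Phi (-(x ⟨(j:ℕ)+1, h⟩)) - Psi' (x j) * Phi (x ⟨(j:ℕ)+1, h⟩)
             else 0)|
        ≤ Real.sqrt (54 / Real.exp 1) * (Real.sqrt (Real.exp 1) * Real.sqrt (2 * Real.pi)) := by
      split
      · rename_i h
        set k : Fin T := ⟨(j:ℕ)+1, h⟩ with hk
        have hE : Psi' (-(x j)) * -1 * Phi (-(x k)) - Psi' (x j) * Phi (x k)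
            = -(Psi' (-(x j)) * Phi (-(x k))) - Psi' (x j) * Phi (x k) := by ring
        calc |Psi' (-(x j)) * -1 * Phi (-(x k)) - Psi' (x j) * Phi (x k)|
            ≤ |Psi' (-(x j)) * Phi (-(x k))| + |Psi' (x j) * Phi (x k)| := by
              rw [hE]
              exact (abs_sub _ _).trans (by rw [abs_neg])
          _ = |Psi' (-(x j))| * Phi (-(x k)) + |Psi' (x j)| * Phi (x k) := by
              rw [abs_mul, abs_mul, abs_of_nonneg (phi_nonneg _), abs_of_nonneg (phi_nonneg _)]
          _ ≤ Real.sqrt (54 / Real.exp 1) * (Real.sqrt (Real.exp 1) * Real.sqrt (2 * Real.pi)) := by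
              rcases psi'_or (x j) with hz | hz
              · rw [hz, abs_zero, zero_mul, add_zero]
                exact mul_le_mul (psi'_bound _) (phi_le _) (phi_nonneg _) (Real.sqrt_nonneg _)
              · rw [hz, abs_zero, zero_mul, zero_add]
                exact mul_le_mul (psi'_bound _) (phi_le _) (phi_nonneg _) (Real.sqrt_nonneg _)
      · rw [abs_zero]; positivity
    calc |_ + _| ≤ _ + _ := abs_add_le _ _
      _ ≤ (Real.exp 1 * Real.sqrt (Real.exp 1))
          + Real.sqrt (54 / Real.exp 1) * (Real.sqrt (Real.exp 1) * Real.sqrt (2 * Real.pi)) :=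
            add_le_add habsA habsS
      _ ≤ 23 := num_bound
  refine ⟨key, ?_⟩
  have hsum : (∑ j : Fin T, (fpartial T x j)^2) ≤ (T : ℝ) * 529 := by
    calc (∑ j : Fin T, (fpartial T x j)^2) ≤ ∑ _j : Fin T, (529:ℝ) := by
          apply Finset.sum_le_sum
          intro i _
          have h := key i
          nlinarith [abs_nonneg (fpartial T x i), sq_abs (fpartial T x i)]
      _ = (T : ℝ) * 529 := by simp [mul_comm]
  calc Real.sqrt (∑ j : Fin T, (fpartial T x j)^2) ≤ Real.sqrt ((T:ℝ) * 529) :=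
        Real.sqrt_le_sqrt hsum
    _ = 23 * Real.sqrt T := by
        rw [mul_comm, Real.sqrt_mul (by norm_num : (0:ℝ) ≤ 529),
          show (529:ℝ) = 23^2 by norm_num, Real.sqrt_sq (by norm_num : (0:ℝ) ≤ 23)]
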